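/- MacLaurin inequality: if λ ∈ Γ_k := {λ ∈ ℝ^n : S_i(λ) > 0 for all 1 ≤ i ≤ k} and 1 ≤ l ≤ k ≤ n, then (S_k(λ)/C(n,k))^{1/k} ≤ (S_l(λ)/C(n,l))^{1/l}. -/

import Mathlib

open scoped BigOperators
noncomputable section

/-- The `k`-th elementary symmetric function of `lam` over an index set `s`. -/
def esymmOn {n : ℕ} (s : Finset (Fin n)) (k : ℕ) (lam : Fin n → ℝ) : ℝ :=
  ∑ t ∈ s.powersetCard k, ∏ i ∈ t, lam i

/-- The `k`-th elementary symmetric polynomial `S_k` on `ℝ^n`. -/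
def esymm' (n k : ℕ) (lam : Fin n → ℝ) : ℝ := esymmOn Finset.univ k lam

/-- The Gårding cone `Γ_k = {λ : S_i(λ) > 0, 1 ≤ i ≤ k}`. -/
def Gamma (n k : ℕ) : Set (Fin n → ℝ) :=
  {lam | ∀ i : ℕ, 1 ≤ i → i ≤ k → 0 < esymm' n i lam}

lemma sum_compl_reindex {n k : ℕ} (hk : k ≤ n) (g : Finset (Fin n) → ℝ) :
    ∑ t ∈ Finset.univ.powersetCard k, g t
      = ∑ s ∈ Finset.univ.powersetCard (n - k), g sᶜ := by
  refine Finset.sum_nbij' (fun t => tᶜ) (fun s => sᶜ) ?_ ?_ ?_ ?_ ?_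
  · intro t ht
    rw [Finset.mem_powersetCard_univ] at ht ⊢
    simp [Finset.card_compl, ht]
  · intro s hs
    rw [Finset.mem_powersetCard_univ] at hs ⊢
    simp [Finset.card_compl, hs]
    omega
  · intro t _; simp
  · intro s _; simp
  · intro t _; simp

lemma esymm'_top {n : ℕ} (f : Fin n → ℝ) : esymm' n n f = ∏ i, f i := by
  have h : Finset.powersetCard n (Finset.univ : Finset (Fin n)) = {Finset.univ} := by
    have := Finset.powersetCard_self (Finset.univ : Finset (Fin n))
    simpa using this
  rw [esymm', esymmOn, h]
  simp

lemma prod_compl_pair {n : ℕ} (f : Fin n → ℝ) {a b : Fin n} (hab : a ≠ b) :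
    (∏ i ∈ ({a}ᶜ : Finset (Fin n)), f i) * ∏ i ∈ ({b}ᶜ : Finset (Fin n)), f i
      = (∏ i ∈ ({a, b}ᶜ : Finset (Fin n)), f i) * ∏ i, f i := by
  have h1 : ({a}ᶜ : Finset (Fin n)) = insert b ({a, b}ᶜ : Finset (Fin n)) := by
    ext x
    by_cases hxa : x = a <;> by_cases hxb : x = b <;>
      simp [hxa, hxb, hab, hab.symm]
  have h2 : ({b}ᶜ : Finset (Fin n)) = insert a ({a, b}ᶜ : Finset (Fin n)) := by
    ext x
    by_cases hxa : x = a <;> by_cases hxb : x = b <;>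
      simp [hxa, hxb, hab, hab.symm]
  have hbmem : b ∉ ({a, b}ᶜ : Finset (Fin n)) := by simp
  have hamem : a ∉ ({a, b}ᶜ : Finset (Fin n)) := by simp
  have huniv : (∏ i ∈ ({a, b} : Finset (Fin n)), f i) * ∏ i ∈ ({a, b}ᶜ : Finset (Fin n)), f i
      = ∏ i, f i := Finset.prod_mul_prod_compl _ _
  rw [Finset.prod_pair hab] at huniv
  rw [h1, h2, Finset.prod_insert hbmem, Finset.prod_insert hamem, ← huniv]
  ring

lemma newton_base {n : ℕ} (m : ℕ) (hn : n = m + 2) (f : Fin n → ℝ) :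
    esymm' n m f * esymm' n (m+2) f * ((n.choose (m+1) : ℕ) : ℝ)^2
      ≤ esymm' n (m+1) f ^ 2 * (((n.choose m : ℕ) : ℝ) * ((n.choose (m+2) : ℕ) : ℝ)) := by
  set y : Fin n → ℝ := fun a => ∏ i ∈ ({a}ᶜ : Finset (Fin n)), f i with hy
  have hS : esymm' n (m+1) f = ∑ a, y a := by
    rw [esymm', esymmOn, sum_compl_reindex (by omega)]
    have h1 : n - (m+1) = 1 := by omega
    rw [h1, Finset.powersetCard_one, Finset.sum_map]
    rfl
  have hA : esymm' n m f = ∑ s ∈ Finset.univ.powersetCard 2, ∏ i ∈ sᶜ, f i := by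
    rw [esymm', esymmOn, sum_compl_reindex (by omega)]
    have h1 : n - m = 2 := by omega
    rw [h1]
  have hoff : ∑ p ∈ (Finset.univ : Finset (Fin n)).offDiag, y p.1 * y p.2
      = 2 * (esymm' n m f * ∏ i, f i) := by
    have hmaps : ∀ p ∈ (Finset.univ : Finset (Fin n)).offDiag,
        ({p.1, p.2} : Finset (Fin n)) ∈ Finset.univ.powersetCard 2 := by
      intro p hp
      rw [Finset.mem_offDiag] at hp
      rw [Finset.mem_powersetCard_univ]
      exact Finset.card_pair hp.2.2
    rw [← Finset.sum_fiberwise_of_maps_to hmaps (fun p => y p.1 * y p.2)]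
    have hinner : ∀ s ∈ Finset.univ.powersetCard 2,
        (∑ p ∈ Finset.univ.offDiag.filter
            (fun p => ({p.1, p.2} : Finset (Fin n)) = s), y p.1 * y p.2)
          = 2 * ((∏ i ∈ sᶜ, f i) * ∏ i, f i) := by
      intro s hs
      rw [Finset.mem_powersetCard_univ, Finset.card_eq_two] at hs
      obtain ⟨a, b, hab, rfl⟩ := hs
      have hfilter : (Finset.univ.offDiag.filter
          (fun p => ({p.1, p.2} : Finset (Fin n)) = ({a, b} : Finset (Fin n))))
          = {(a, b), (b, a)} := by
        ext p
        simp only [Finset.mem_filter, Finset.mem_offDiag, Finset.mem_univ, true_and,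
          Finset.mem_insert, Finset.mem_singleton]
        constructor
        · rintro ⟨hne, hset⟩
          have h1 : p.1 ∈ ({a, b} : Finset (Fin n)) := by rw [← hset]; simp
          have h2 : p.2 ∈ ({a, b} : Finset (Fin n)) := by rw [← hset]; simp
          simp only [Finset.mem_insert, Finset.mem_singleton] at h1 h2
          rcases h1 with h1 | h1 <;> rcases h2 with h2 | h2
          · exact absurd (h1.trans h2.symm) hne
          · left; exact Prod.ext h1 h2
          · right; exact Prod.ext h1 h2
          · exact absurd (h1.trans h2.symm) hne
        · rintro (rfl | rfl)
          · exact ⟨hab, rfl⟩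
          · exact ⟨hab.symm, by rw [Finset.pair_comm]⟩
      rw [hfilter]
      have hne : ((a, b) : Fin n × Fin n) ≠ (b, a) := by
        simp [Prod.ext_iff, hab]
      rw [Finset.sum_insert (by simp [hne]), Finset.sum_singleton]
      have e1 := prod_compl_pair f hab
      have e2 := prod_compl_pair f hab.symm
      rw [Finset.pair_comm b a] at e2
      simp only [hy]
      rw [e1, e2]
      ring
    rw [Finset.sum_congr rfl hinner, hA, Finset.sum_mul, Finset.mul_sum]
  have hdiag : ∑ p ∈ (Finset.univ : Finset (Fin n)).diag, y p.1 * y p.2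
      = ∑ a, (y a)^2 := by
    refine Finset.sum_nbij' (fun p => p.1) (fun a => (a, a)) ?_ ?_ ?_ ?_ ?_
    · intro p _; exact Finset.mem_univ _
    · intro a _; rw [Finset.mem_diag]; exact ⟨Finset.mem_univ _, rfl⟩
    · intro p hp
      rw [Finset.mem_diag] at hp
      exact Prod.ext rfl hp.2
    · intro a _; rfl
    · intro p hp
      rw [Finset.mem_diag] at hp
      rw [← hp.2, sq]
  have hsq : (∑ a, y a)^2 = (∑ a, (y a)^2)
      + ∑ p ∈ (Finset.univ : Finset (Fin n)).offDiag, y p.1 * y p.2 := by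
    rw [sq, Finset.sum_mul_sum]
    rw [← Finset.sum_product']
    rw [← Finset.diag_union_offDiag,
      Finset.sum_union (Finset.disjoint_diag_offDiag _), hdiag]
  have hcs : (∑ a, y a)^2 ≤ (n : ℝ) * ∑ a, (y a)^2 := by
    have := sq_sum_le_card_mul_sum_sq (s := (Finset.univ : Finset (Fin n))) (f := y)
    simpa using this
  have hc1 : ((n.choose (m+1) : ℕ) : ℝ) = (n : ℝ) := by
    simp [hn, Nat.choose_succ_self_right]
    push_cast
    ring
  have hc3 : ((n.choose (m+2) : ℕ) : ℝ) = 1 := by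
    rw [hn, Nat.choose_self]; norm_num
  have hc2 : 2 * ((n.choose m : ℕ) : ℝ) = (n : ℝ) * ((m : ℝ) + 1) := by
    have h1 : n.choose m = n.choose 2 := by
      have h : n - 2 = m := by omega
      rw [← h, Nat.choose_symm (by omega)]
    have h2 : 2 * n.choose 2 = n * (n - 1) := by
      rw [Nat.choose_two_right]
      have hdvd : 2 ∣ n * (n - 1) := by
        rcases Nat.even_or_odd n with h | h
        · exact Dvd.dvd.mul_right h.two_dvd _
        · exact Dvd.dvd.mul_left (Nat.Odd.sub_odd h odd_one).two_dvd _
      omega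
    have h4 : ((n - 1 : ℕ) : ℝ) = (m : ℝ) + 1 := by
      rw [hn]
      push_cast [Nat.add_sub_cancel]
      ring
    calc 2 * ((n.choose m : ℕ) : ℝ) = ((2 * n.choose 2 : ℕ) : ℝ) := by
          rw [h1]; push_cast; ring
      _ = ((n : ℕ) : ℝ) * ((n - 1 : ℕ) : ℝ) := by rw [h2]; push_cast; ring
      _ = (n : ℝ) * ((m : ℝ) + 1) := by rw [h4]
  have htop : esymm' n (m+2) f = ∏ i, f i := by
    rw [← hn]; exact esymm'_top f
  have hnn : (n : ℝ) = (m : ℝ) + 2 := by rw [hn]; push_cast; ring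
  rw [hS, htop, hc1, hc3, mul_one]
  have h2EP : 2 * (esymm' n m f * ∏ i, f i) = (∑ a, y a)^2 - ∑ a, (y a)^2 := by
    rw [hsq, ← hoff]; ring
  have key : (n : ℝ) * (∑ a, y a)^2 ≤ (n : ℝ) * ((n : ℝ) * ∑ a, (y a)^2) :=
    mul_le_mul_of_nonneg_left hcs (by positivity)
  have e1 : 2 * ((esymm' n m f * ∏ i, f i) * (n:ℝ)^2)
      = ((∑ a, y a)^2 - ∑ a, (y a)^2) * (n:ℝ)^2 := by
    rw [← h2EP]; ring
  have e2 : 2 * ((∑ a, y a)^2 * ((n.choose m : ℕ):ℝ))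
      = (∑ a, y a)^2 * ((n:ℝ)*(n:ℝ) - (n:ℝ)) := by
    calc 2 * ((∑ a, y a)^2 * ((n.choose m : ℕ):ℝ))
        = (∑ a, y a)^2 * (2 * ((n.choose m : ℕ):ℝ)) := by ring
      _ = (∑ a, y a)^2 * ((n:ℝ) * ((m:ℝ)+1)) := by rw [hc2]
      _ = (∑ a, y a)^2 * ((n:ℝ)*(n:ℝ) - (n:ℝ)) := by rw [hnn]; ring
  nlinarith [key, e1, e2]

lemma exists_fn (M : Multiset ℝ) {n : ℕ} (h : Multiset.card M = n) :
    ∃ f : Fin n → ℝ, Multiset.map f Finset.univ.val = M := by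
  obtain ⟨l, rfl⟩ := Quotient.exists_rep M
  change Multiset.card (l : Multiset ℝ) = n at h
  rw [Multiset.coe_card] at h
  subst h
  refine ⟨l.get, ?_⟩
  change Multiset.map l.get Finset.univ.val = (l : Multiset ℝ)
  rw [Fin.univ_val_map]
  simp [List.ofFn_get]

lemma newton_mset (N : ℕ) : ∀ (M : Multiset ℝ), Multiset.card M = N → ∀ i : ℕ, i + 2 ≤ N →
    M.esymm i * M.esymm (i+2) * ((N.choose (i+1) : ℕ) : ℝ)^2
      ≤ M.esymm (i+1)^2 * (((N.choose i : ℕ) : ℝ) * ((N.choose (i+2) : ℕ) : ℝ)) := by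
  induction N using Nat.strong_induction_on with
  | _ N IH =>
  intro M hM i hi
  rcases eq_or_lt_of_le hi with heq | hlt
  · obtain ⟨f, hf⟩ := exists_fn M hM
    have hes : ∀ j, M.esymm j = esymm' N j f := by
      intro j; rw [← hf, Finset.esymm_map_val]; rfl
    rw [hes, hes, hes]
    exact newton_base i heq.symm f
  · have hN1 : 1 ≤ N := by omega
    set P : Polynomial ℝ := (M.map (fun a => Polynomial.X - Polynomial.C a)).prod with hP
    have hPm : P.Monic :=
      Polynomial.monic_multiset_prod_of_monic _ _ (fun a _ => Polynomial.monic_X_sub_C a)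
    have hPdeg : P.natDegree = N := by
      rw [hP, Polynomial.natDegree_multiset_prod_X_sub_C_eq_card, hM]
    have hProots : P.roots = M := by
      rw [hP, Polynomial.roots_multiset_prod_X_sub_C]
    set Q := Polynomial.derivative P with hQ
    have hQdeg_le : Q.natDegree ≤ N - 1 := by
      have h := Polynomial.natDegree_derivative_le P
      rw [hPdeg] at h
      exact h
    have hcard_le : Multiset.card Q.roots ≤ Q.natDegree := Q.card_roots'
    have hcard_ge : N ≤ Multiset.card Q.roots + 1 := by
      have h := P.card_roots_le_derivative
      rw [hProots, hM] at h
      exact h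
    have hQroots : Multiset.card Q.roots = N - 1 := by omega
    have hQdeg : Q.natDegree = N - 1 := by omega
    set M' := Q.roots with hM'
    have hfac : Polynomial.C Q.leadingCoeff
        * (M'.map (fun a => Polynomial.X - Polynomial.C a)).prod = Q :=
      Polynomial.C_leadingCoeff_mul_prod_multiset_X_sub_C (hQroots.trans hQdeg.symm)
    have hcoeffN : P.coeff N = 1 := by
      rw [← hPdeg]; exact hPm.coeff_natDegree
    have hlc : Q.leadingCoeff = (N : ℝ) := by
      rw [Polynomial.leadingCoeff, hQdeg, hQ, Polynomial.coeff_derivative,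
        show N - 1 + 1 = N from by omega, hcoeffN, one_mul]
      have : ((N - 1 : ℕ) : ℝ) = (N : ℝ) - 1 := by
        push_cast [Nat.cast_sub hN1]; ring
      rw [this]; ring
    have hkey : ∀ j : ℕ, j ≤ N - 1 →
        (N : ℝ) * M'.esymm j = ((N - j : ℕ) : ℝ) * M.esymm j := by
      intro j hj
      have hnat : N - 1 - j + 1 = N - j := by omega
      have e1 : Q.coeff (N - 1 - j) = P.coeff (N - j) * ((N - j : ℕ) : ℝ) := by
        rw [hQ, Polynomial.coeff_derivative, hnat]
        congr 1
        exact_mod_cast congrArg (fun t : ℕ => (t : ℝ)) hnat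
      have e2 : P.coeff (N - j) = (-1 : ℝ)^j * M.esymm j := by
        rw [hP, Multiset.prod_X_sub_C_coeff M (by rw [hM]; omega), hM,
          show N - (N - j) = j from by omega]
      have e3 : Q.coeff (N - 1 - j) = (N : ℝ) * ((-1 : ℝ)^j * M'.esymm j) := by
        conv_lhs => rw [← hfac]
        rw [Polynomial.coeff_C_mul, hlc]
        congr 1
        rw [Multiset.prod_X_sub_C_coeff M' (by rw [hQroots]; omega), hQroots,
          show N - 1 - (N - 1 - j) = j from by omega]
      have e5 : (N : ℝ) * ((-1 : ℝ)^j * M'.esymm j)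
          = ((-1 : ℝ)^j * M.esymm j) * ((N - j : ℕ) : ℝ) := by
        rw [← e3, e1, e2]
      have e6 : ((-1 : ℝ)^j) * ((N : ℝ) * M'.esymm j)
          = ((-1 : ℝ)^j) * (((N - j : ℕ) : ℝ) * M.esymm j) := by
        linear_combination e5
      exact mul_left_cancel₀ (pow_ne_zero j (by norm_num : (-1 : ℝ) ≠ 0)) e6
    have hch : ∀ j : ℕ, (N : ℝ) * (((N-1).choose j : ℕ) : ℝ)
        = ((N - j : ℕ) : ℝ) * ((N.choose j : ℕ) : ℝ) := by
      intro j
      have h := Nat.choose_mul_succ_eq (N-1) j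
      rw [show N - 1 + 1 = N from by omega] at h
      have h2 := congrArg (fun t : ℕ => (t : ℝ)) h
      push_cast at h2
      linear_combination h2
    have hIH := IH (N-1) (by omega) M' hQroots i (by omega)
    have hu : (0 : ℝ) < ((N - i : ℕ) : ℝ) := by
      have : 0 < N - i := by omega
      exact_mod_cast this
    have hv : (0 : ℝ) < ((N - (i+1) : ℕ) : ℝ) := by
      have : 0 < N - (i+1) := by omega
      exact_mod_cast this
    have hw : (0 : ℝ) < ((N - (i+2) : ℕ) : ℝ) := by
      have : 0 < N - (i+2) := by omega
      exact_mod_cast this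
    have hL : (N : ℝ)^4 * (M'.esymm i * M'.esymm (i+2) * (((N-1).choose (i+1) : ℕ) : ℝ)^2)
        = (((N - i : ℕ) : ℝ) * ((N - (i+2) : ℕ) : ℝ) * ((N - (i+1) : ℕ) : ℝ)^2)
          * (M.esymm i * M.esymm (i+2) * ((N.choose (i+1) : ℕ) : ℝ)^2) := by
      calc (N : ℝ)^4 * (M'.esymm i * M'.esymm (i+2) * (((N-1).choose (i+1) : ℕ) : ℝ)^2)
          = ((N : ℝ) * M'.esymm i) * (((N : ℝ) * M'.esymm (i+2))
            * ((N : ℝ) * (((N-1).choose (i+1) : ℕ) : ℝ))^2) := by ring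
        _ = (((N - i : ℕ) : ℝ) * M.esymm i) * ((((N - (i+2) : ℕ) : ℝ) * M.esymm (i+2))
            * (((N - (i+1) : ℕ) : ℝ) * ((N.choose (i+1) : ℕ) : ℝ))^2) := by
            rw [hkey i (by omega), hkey (i+2) (by omega), hch (i+1)]
        _ = (((N - i : ℕ) : ℝ) * ((N - (i+2) : ℕ) : ℝ) * ((N - (i+1) : ℕ) : ℝ)^2)
            * (M.esymm i * M.esymm (i+2) * ((N.choose (i+1) : ℕ) : ℝ)^2) := by ring
    have hR : (N : ℝ)^4 * (M'.esymm (i+1)^2 * ((((N-1).choose i : ℕ) : ℝ)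
          * (((N-1).choose (i+2) : ℕ) : ℝ)))
        = (((N - i : ℕ) : ℝ) * ((N - (i+2) : ℕ) : ℝ) * ((N - (i+1) : ℕ) : ℝ)^2)
          * (M.esymm (i+1)^2 * (((N.choose i : ℕ) : ℝ) * ((N.choose (i+2) : ℕ) : ℝ))) := by
      calc (N : ℝ)^4 * (M'.esymm (i+1)^2 * ((((N-1).choose i : ℕ) : ℝ)
            * (((N-1).choose (i+2) : ℕ) : ℝ)))
          = ((N : ℝ) * M'.esymm (i+1))^2 * (((N : ℝ) * (((N-1).choose i : ℕ) : ℝ))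
            * ((N : ℝ) * (((N-1).choose (i+2) : ℕ) : ℝ))) := by ring
        _ = (((N - (i+1) : ℕ) : ℝ) * M.esymm (i+1))^2 * ((((N - i : ℕ) : ℝ)
            * ((N.choose i : ℕ) : ℝ)) * (((N - (i+2) : ℕ) : ℝ) * ((N.choose (i+2) : ℕ) : ℝ))) := by
            rw [hkey (i+1) (by omega), hch i, hch (i+2)]
        _ = (((N - i : ℕ) : ℝ) * ((N - (i+2) : ℕ) : ℝ) * ((N - (i+1) : ℕ) : ℝ)^2)
            * (M.esymm (i+1)^2 * (((N.choose i : ℕ) : ℝ) * ((N.choose (i+2) : ℕ) : ℝ))) := by ring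
    have hmono := mul_le_mul_of_nonneg_left hIH (show (0:ℝ) ≤ (N : ℝ)^4 by positivity)
    rw [hL, hR] at hmono
    exact le_of_mul_le_mul_left hmono
      (mul_pos (mul_pos hu hw) (pow_pos hv 2))

lemma newton' {n : ℕ} (i : ℕ) (h : i + 2 ≤ n) (lam : Fin n → ℝ) :
    esymm' n i lam * esymm' n (i+2) lam * ((n.choose (i+1) : ℕ) : ℝ)^2
      ≤ esymm' n (i+1) lam ^ 2 * (((n.choose i : ℕ) : ℝ) * ((n.choose (i+2) : ℕ) : ℝ)) := by
  have hcard : Multiset.card (Multiset.map lam Finset.univ.val) = n := by simp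
  have hes : ∀ j, (Multiset.map lam Finset.univ.val).esymm j = esymm' n j lam := by
    intro j; rw [Finset.esymm_map_val]; rfl
  have h2 := newton_mset n (Multiset.map lam Finset.univ.val) hcard i h
  rwa [hes, hes, hes] at h2

lemma esymm'_zero {n : ℕ} (lam : Fin n → ℝ) : esymm' n 0 lam = 1 := by
  simp [esymm', esymmOn]

/-- The MacLaurin inequality on `Γ_k`. -/
theorem stmt_2 (n k l : ℕ) (hl : 1 ≤ l) (hlk : l ≤ k) (hkn : k ≤ n)
    (lam : Fin n → ℝ) (hlam : lam ∈ Gamma n k) :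
    (esymm' n k lam / (n.choose k : ℝ)) ^ ((1 : ℝ) / k)
      ≤ (esymm' n l lam / (n.choose l : ℝ)) ^ ((1 : ℝ) / l) := by
  set p : ℕ → ℝ := fun i => esymm' n i lam / (n.choose i : ℝ) with hp
  have hcpos : ∀ i, i ≤ n → (0:ℝ) < (n.choose i : ℝ) := by
    intro i h
    exact_mod_cast Nat.choose_pos h
  have hppos : ∀ i, i ≤ k → 0 < p i := by
    intro i hik
    rcases Nat.eq_zero_or_pos i with rfl | h1
    · simp [hp, esymm'_zero]
    · exact div_pos (hlam i h1 hik) (hcpos i (le_trans hik hkn))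
  have hnewton : ∀ i, i + 2 ≤ n → p i * p (i+2) ≤ p (i+1)^2 := by
    intro i h
    have h0 := hcpos i (by omega)
    have h1 := hcpos (i+1) (by omega)
    have h2 := hcpos (i+2) (by omega)
    rw [hp]
    simp only
    rw [div_mul_div_comm, div_pow, div_le_div_iff₀ (by positivity) (by positivity)]
    exact newton' i h lam
  have hQ : ∀ j, j + 1 ≤ k → p (j+1) ^ j ≤ p j ^ (j+1) := by
    intro j
    induction j with
    | zero => intro _; simp [hp, esymm'_zero]
    | succ m ihm =>
      intro hm2
      have ih := ihm (by omega)
      have hnew := hnewton m (by omega)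
      have h0 : 0 < p m := hppos m (by omega)
      have h1 : 0 < p (m+1) := hppos (m+1) (by omega)
      have h2 : 0 < p (m+2) := hppos (m+2) (by omega)
      have s1 : p (m+2) ≤ p (m+1)^2 / p m := by
        rw [le_div_iff₀ h0]
        nlinarith [hnew]
      have s2 : p (m+2)^(m+1) ≤ (p (m+1)^2 / p m)^(m+1) :=
        pow_le_pow_left₀ h2.le s1 (m+1)
      have s3 : (p (m+1)^2 / p m)^(m+1) = p (m+1)^(2*(m+1)) / p m^(m+1) := by
        rw [div_pow, ← pow_mul]
      have s4 : p (m+1)^(2*(m+1)) / p m^(m+1) ≤ p (m+1)^(2*(m+1)) / p (m+1)^m := by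
        gcongr
      have s5 : p (m+1)^(2*(m+1)) / p (m+1)^m = p (m+1)^(m+2) := by
        rw [div_eq_iff (by positivity), ← pow_add]
        congr 1
        omega
      calc p (m+2)^(m+1) ≤ (p (m+1)^2 / p m)^(m+1) := s2
        _ = p (m+1)^(2*(m+1)) / p m^(m+1) := s3
        _ ≤ p (m+1)^(2*(m+1)) / p (m+1)^m := s4
        _ = p (m+1)^(m+2) := s5
  have hadj : ∀ j, 1 ≤ j → j + 1 ≤ k →
      p (j+1) ^ ((1:ℝ)/((j+1 : ℕ) : ℝ)) ≤ p j ^ ((1:ℝ)/((j : ℕ) : ℝ)) := by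
    intro j hj1 hjk
    have h0 : 0 < p j := hppos j (by omega)
    have h1 : 0 < p (j+1) := hppos (j+1) (by omega)
    have hq := hQ j hjk
    have hr : (p (j+1)) ^ ((j : ℕ) : ℝ) ≤ (p j) ^ (((j+1 : ℕ) : ℕ) : ℝ) := by
      rw [Real.rpow_natCast, Real.rpow_natCast]
      exact_mod_cast hq
    have hjR : (0:ℝ) < (j : ℝ) := by exact_mod_cast hj1
    have hexp : (0:ℝ) ≤ 1 / ((j:ℝ) * ((j:ℝ)+1)) := by positivity
    have hmain := Real.rpow_le_rpow (by positivity) hr hexp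
    rw [← Real.rpow_mul h1.le, ← Real.rpow_mul h0.le] at hmain
    have e1 : ((j:ℕ):ℝ) * (1/((j:ℝ)*((j:ℝ)+1))) = 1/(((j+1:ℕ)):ℝ) := by
      push_cast
      field_simp
    have e2 : (((j+1:ℕ):ℕ):ℝ) * (1/((j:ℝ)*((j:ℝ)+1))) = 1/((j:ℕ):ℝ) := by
      push_cast
      field_simp
    rw [e1, e2] at hmain
    exact hmain
  have hchain : ∀ m (hm : l ≤ m), m ≤ k → p m ^ ((1:ℝ)/(m : ℝ)) ≤ p l ^ ((1:ℝ)/(l : ℝ)) := by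
    intro m hm
    induction m, hm using Nat.le_induction with
    | base => intro _; exact le_refl _
    | succ m hlm ih =>
      intro hmk
      have step := hadj m (le_trans hl hlm) hmk
      have tail := ih (by omega)
      calc p (m+1) ^ ((1:ℝ)/((m+1 : ℕ) : ℝ)) ≤ p m ^ ((1:ℝ)/((m:ℕ) : ℝ)) := step
        _ ≤ p l ^ ((1:ℝ)/(l : ℝ)) := tail
  exact hchain k hlk le_rfl
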